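/- Let r be an integer with r ≥ 4 and define ρ_r by ρ_r(0) = 0 and the recurrence ρ_r(n+1) = r/(r − ρ_r(n)). Then the multisets (n₁,…,n_s) of positive integers with ρ_r(n₁)+⋯+ρ_r(n_s) = r are exactly: (1 repeated r times), (2 repeated r−1 times), (1 together with 3 repeated r−2 times), and (1, 2 together with 5 repeated r−3 times). -/

import Mathlib

namespace Stmt4Aux


lemma sum_map_lt_card_mul {s : Multiset ℕ} {f : ℕ → ℝ} {C : ℝ}
    (hs : s ≠ 0) (h : ∀ n ∈ s, f n < C) : (s.map f).sum < (s.card : ℝ) * C := by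
  induction s using Multiset.induction with
  | empty => exact absurd rfl hs
  | cons a t ih =>
    rcases eq_or_ne t 0 with rfl | ht
    · simpa using h a (by simp)
    · have h1 := h a (by simp)
      have h2 := ih ht (fun n hn => h n (by simp [hn]))
      simp only [Multiset.map_cons, Multiset.sum_cons, Multiset.card_cons]
      push_cast
      nlinarith

lemma card_mul_le_sum_map {s : Multiset ℕ} {f : ℕ → ℝ} {C : ℝ}
    (h : ∀ n ∈ s, C ≤ f n) : (s.card : ℝ) * C ≤ (s.map f).sum := by
  induction s using Multiset.induction with
  | empty => simp
  | cons a t ih =>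
    have h1 := h a (by simp)
    have h2 := ih (fun n hn => h n (by simp [hn]))
    simp only [Multiset.map_cons, Multiset.sum_cons, Multiset.card_cons]
    push_cast
    nlinarith

lemma card_mul_lt_sum_map {s : Multiset ℕ} {f : ℕ → ℝ} {C : ℝ}
    (hs : s ≠ 0) (h : ∀ n ∈ s, C < f n) : (s.card : ℝ) * C < (s.map f).sum := by
  induction s using Multiset.induction with
  | empty => exact absurd rfl hs
  | cons a t ih =>
    rcases eq_or_ne t 0 with rfl | ht
    · simpa using h a (by simp)
    · have h1 := h a (by simp)
      have h2 := ih ht (fun n hn => h n (by simp [hn]))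
      simp only [Multiset.map_cons, Multiset.sum_cons, Multiset.card_cons]
      push_cast
      nlinarith

lemma sum_map_eq_card_mul {s : Multiset ℕ} {f : ℕ → ℝ} {C : ℝ}
    (h : ∀ n ∈ s, f n = C) : (s.map f).sum = (s.card : ℝ) * C := by
  induction s using Multiset.induction with
  | empty => simp
  | cons a t ih =>
    have h1 := h a (by simp)
    have h2 := ih (fun n hn => h n (by simp [hn]))
    simp only [Multiset.map_cons, Multiset.sum_cons, Multiset.card_cons]
    push_cast
    rw [h1, h2]; ring

lemma mem_le_of_sum_le {s : Multiset ℕ} {f : ℕ → ℝ} {C : ℝ} {n₀ : ℕ}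
    (h : ∀ n ∈ s, C ≤ f n) (hsum : (s.map f).sum ≤ (s.card : ℝ) * C) (hn₀ : n₀ ∈ s) :
    f n₀ ≤ C := by
  obtain ⟨t, rfl⟩ := Multiset.exists_cons_of_mem hn₀
  have h2 : (t.card : ℝ) * C ≤ (t.map f).sum :=
    card_mul_le_sum_map (fun n hn => h n (by simp [hn]))
  simp only [Multiset.map_cons, Multiset.sum_cons, Multiset.card_cons] at hsum
  push_cast at hsum
  nlinarith

lemma sum_map_mul_right' {s : Multiset ℕ} {f : ℕ → ℝ} {c : ℝ} :
    (s.map (fun n => f n * c)).sum = (s.map f).sum * c := by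
  induction s using Multiset.induction with
  | empty => simp
  | cons a t ih => simp only [Multiset.map_cons, Multiset.sum_cons, ih]; ring


section
variable {r : ℕ} (hr : 4 ≤ r) {rho : ℕ → ℝ} (hrho0 : rho 0 = 0)
  (hrho : ∀ n : ℕ, rho (n + 1) = (r : ℝ) / ((r : ℝ) - rho n))

include hr hrho0 hrho

lemma rho_one : rho 1 = 1 := by
  have hx : (4:ℝ) ≤ (r:ℝ) := by exact_mod_cast hr
  rw [hrho 0, hrho0, sub_zero, div_self (by linarith)]

lemma rho_main : ∀ n, 0 ≤ rho n ∧ rho n < rho (n + 1) ∧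
    rho (n + 1) < 1 + ((r:ℝ) - 3)/((r:ℝ)^2 - 5*(r:ℝ) + 5) := by
  have hx : (4:ℝ) ≤ (r:ℝ) := by exact_mod_cast hr
  set x : ℝ := (r:ℝ) with hxdef
  have hD : (0:ℝ) < x^2 - 5*x + 5 := by nlinarith
  have hB0 : 0 < (x-3)/(x^2-5*x+5) := div_pos (by linarith) hD
  have hB1 : (x-3)/(x^2-5*x+5) ≤ 1 := by
    rw [div_le_one hD]; nlinarith
  set B : ℝ := (x-3)/(x^2-5*x+5) with hBdef
  have hBD : B * (x^2-5*x+5) = x - 3 := div_mul_cancel₀ _ (ne_of_gt hD)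
  intro n
  induction n with
  | zero =>
    refine ⟨le_of_eq hrho0.symm, ?_, ?_⟩
    · rw [hrho0, rho_one hr hrho0 hrho]; norm_num
    · rw [rho_one hr hrho0 hrho]; linarith
  | succ n ih =>
    obtain ⟨h0, hlt, hub⟩ := ih
    have h0' : 0 ≤ rho (n+1) := le_trans h0 hlt.le
    have hub2 : rho (n+1) < 2 := by linarith
    have hd : 0 < x - rho (n+1) := by linarith
    have hd' : 0 < x - rho n := by linarith
    refine ⟨h0', ?_, ?_⟩
    · conv_lhs => rw [hrho n]
      rw [hrho (n+1)]
      exact div_lt_div_of_pos_left (by linarith) hd (by linarith)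
    · rw [hrho (n+1)]
      have hdB : 0 < x - (1 + B) := by linarith
      have s1 : x / (x - rho (n+1)) < x / (x - (1+B)) :=
        div_lt_div_of_pos_left (by linarith) hdB (by linarith)
      have s2 : x / (x - (1+B)) ≤ 1 + B := by
        rw [div_le_iff₀ hdB]
        nlinarith [hBD, hD, sq_nonneg (B*(x^2-5*x+5) - (x-3))]
      linarith


lemma rho_mono : StrictMono rho :=
  strictMono_nat_of_lt_succ (fun n => (rho_main hr hrho0 hrho n).2.1)

lemma rho_nonneg : ∀ n, 0 ≤ rho n := fun n => (rho_main hr hrho0 hrho n).1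

lemma rho_ub : ∀ n, rho n < 1 + ((r:ℝ) - 3)/((r:ℝ)^2 - 5*(r:ℝ) + 5) := by
  intro n
  cases n with
  | zero =>
    have hx : (4:ℝ) ≤ (r:ℝ) := by exact_mod_cast hr
    have hD : (0:ℝ) < (r:ℝ)^2 - 5*(r:ℝ) + 5 := by nlinarith
    rw [hrho0]
    have : (0:ℝ) < ((r:ℝ)-3)/((r:ℝ)^2-5*(r:ℝ)+5) := div_pos (by linarith) hD
    linarith
  | succ n => exact (rho_main hr hrho0 hrho n).2.2

lemma rho_lt2 : ∀ n, rho n < 2 := by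
  intro n
  have hx : (4:ℝ) ≤ (r:ℝ) := by exact_mod_cast hr
  have hD : (0:ℝ) < (r:ℝ)^2 - 5*(r:ℝ) + 5 := by nlinarith
  have hB1 : ((r:ℝ)-3)/((r:ℝ)^2-5*(r:ℝ)+5) ≤ 1 := by rw [div_le_one hD]; nlinarith
  have := rho_ub hr hrho0 hrho n
  linarith

lemma rho_ubD : ∀ n, rho n * ((r:ℝ)^2 - 5*(r:ℝ) + 5) < (r:ℝ)^2 - 4*(r:ℝ) + 2 := by
  intro n
  have hx : (4:ℝ) ≤ (r:ℝ) := by exact_mod_cast hr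
  have hD : (0:ℝ) < (r:ℝ)^2 - 5*(r:ℝ) + 5 := by nlinarith
  have h1 := mul_lt_mul_of_pos_right (rho_ub hr hrho0 hrho n) hD
  have h2 : (1 + ((r:ℝ)-3)/((r:ℝ)^2-5*(r:ℝ)+5)) * ((r:ℝ)^2-5*(r:ℝ)+5)
      = (r:ℝ)^2 - 4*(r:ℝ) + 2 := by rw [add_mul, div_mul_cancel₀ _ (ne_of_gt hD)]; ring
  linarith

lemma rho_step : ∀ n, rho (n+1) * ((r:ℝ) - rho n) = (r:ℝ) := by
  intro n
  have hx : (4:ℝ) ≤ (r:ℝ) := by exact_mod_cast hr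
  have h2 := rho_lt2 hr hrho0 hrho n
  rw [hrho n]
  exact div_mul_cancel₀ _ (by linarith)

lemma rho_val2 : rho 2 * ((r:ℝ) - 1) = (r:ℝ) := by
  have h := rho_step hr hrho0 hrho 1
  rw [rho_one hr hrho0 hrho] at h
  linarith

lemma rho_val3 : rho 3 * ((r:ℝ) - 2) = (r:ℝ) - 1 := by
  have hx : (4:ℝ) ≤ (r:ℝ) := by exact_mod_cast hr
  have e := rho_step hr hrho0 hrho 2
  have h2 := rho_val2 hr hrho0 hrho
  have e2 : rho 3 * ((r:ℝ)-2) * (r:ℝ) = ((r:ℝ)-1) * (r:ℝ) := by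
    linear_combination ((r:ℝ)-1) * e + rho 3 * h2
  exact mul_right_cancel₀ (by linarith) e2

lemma rho_val4 : rho 4 * ((r:ℝ)^2 - 3*(r:ℝ) + 1) = (r:ℝ) * ((r:ℝ) - 2) := by
  have e := rho_step hr hrho0 hrho 3
  have h3 := rho_val3 hr hrho0 hrho
  linear_combination ((r:ℝ)-2) * e + rho 4 * h3

lemma rho_val5 : rho 5 * (((r:ℝ) - 1) * ((r:ℝ) - 3)) = (r:ℝ)^2 - 3*(r:ℝ) + 1 := by
  have hx : (4:ℝ) ≤ (r:ℝ) := by exact_mod_cast hr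
  have e := rho_step hr hrho0 hrho 4
  have h4 := rho_val4 hr hrho0 hrho
  have e2 : rho 5 * (((r:ℝ)-1) * ((r:ℝ)-3)) * (r:ℝ) = ((r:ℝ)^2 - 3*(r:ℝ) + 1) * (r:ℝ) := by
    linear_combination ((r:ℝ)^2 - 3*(r:ℝ) + 1) * e + rho 5 * h4
  exact mul_right_cancel₀ (by linarith) e2

lemma rho_two_step : ∀ n, rho (n+2) * ((r:ℝ) - 1 - rho n) = (r:ℝ) - rho n := by
  intro n
  have hx : (4:ℝ) ≤ (r:ℝ) := by exact_mod_cast hr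
  have e1 := rho_step hr hrho0 hrho n
  have e2 := rho_step hr hrho0 hrho (n+1)
  have e3 : rho (n+2) * ((r:ℝ) - 1 - rho n) * (r:ℝ) = ((r:ℝ) - rho n) * (r:ℝ) := by
    linear_combination ((r:ℝ) - rho n) * e2 + rho (n+2) * e1
  exact mul_right_cancel₀ (by linarith) e3

lemma rho_ub6 : ∀ n, 6 ≤ n →
    rho n * ((r:ℝ)^4 - 9*(r:ℝ)^3 + 27*(r:ℝ)^2 - 30*(r:ℝ) + 9)
      < ((r:ℝ)^4 - 9*(r:ℝ)^3 + 27*(r:ℝ)^2 - 30*(r:ℝ) + 9)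
        + ((r:ℝ)^3 - 7*(r:ℝ)^2 + 14*(r:ℝ) - 7) := by
  intro n hn
  obtain ⟨m, rfl⟩ : ∃ m, n = m + 6 := ⟨n - 6, by omega⟩
  have hx : (4:ℝ) ≤ (r:ℝ) := by exact_mod_cast hr
  set x : ℝ := (r:ℝ)
  have h0 := rho_nonneg hr hrho0 hrho (m+2)
  have h1 := rho_nonneg hr hrho0 hrho (m+4)
  have l0 := rho_lt2 hr hrho0 hrho (m+2)
  have l1 := rho_lt2 hr hrho0 hrho (m+4)
  have d0 : (0:ℝ) < x - 1 - rho (m+2) := by linarith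
  have d1 : (0:ℝ) < x - 1 - rho (m+4) := by linarith
  have hub := rho_ubD hr hrho0 hrho (m+2)
  have hF1 := rho_two_step hr hrho0 hrho (m+2)
  have hF2 := rho_two_step hr hrho0 hrho (m+4)
  -- step 1: rho (m+4) * P3 < P3 + D
  have key : (x - rho (m+2)) * (x^3 - 7*x^2 + 14*x - 7)
      < ((x^3 - 7*x^2 + 14*x - 7) + (x^2 - 5*x + 5)) * (x - 1 - rho (m+2)) := by
    nlinarith [hub]
  have e : rho (m+4) * (x^3 - 7*x^2 + 14*x - 7) * (x - 1 - rho (m+2))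
      = (x - rho (m+2)) * (x^3 - 7*x^2 + 14*x - 7) := by
    linear_combination (x^3 - 7*x^2 + 14*x - 7) * hF1
  rw [← e] at key
  have s1 : rho (m+4) * (x^3 - 7*x^2 + 14*x - 7)
      < (x^3 - 7*x^2 + 14*x - 7) + (x^2 - 5*x + 5) := lt_of_mul_lt_mul_right key d0.le
  -- step 2: rho (m+6) * P4 < P4 + P3
  have key2 : (x - rho (m+4)) * (x^4 - 9*x^3 + 27*x^2 - 30*x + 9)
      < ((x^4 - 9*x^3 + 27*x^2 - 30*x + 9) + (x^3 - 7*x^2 + 14*x - 7)) * (x - 1 - rho (m+4)) := by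
    nlinarith [s1]
  have e2 : rho (m+6) * ((x^4 - 9*x^3 + 27*x^2 - 30*x + 9)) * (x - 1 - rho (m+4))
      = (x - rho (m+4)) * (x^4 - 9*x^3 + 27*x^2 - 30*x + 9) := by
    linear_combination (x^4 - 9*x^3 + 27*x^2 - 30*x + 9) * hF2
  rw [← e2] at key2
  exact lt_of_mul_lt_mul_right key2 d1.le

end
end Stmt4Aux

set_option maxHeartbeats 4000000 in
/-- For an integer r ≥ 4, the multisets of positive integers with Σ ρ_r(nᵢ) = r are exactly
(1,…,1) (r times), (2,…,2) (r-1 times), (1,3,…,3) (3 repeated r-2 times),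
and (1,2,5,…,5) (5 repeated r-3 times). -/
theorem stmt_4 (r : ℕ) (hr : 4 ≤ r)
    (rho : ℕ → ℝ) (hrho0 : rho 0 = 0)
    (hrho : ∀ n : ℕ, rho (n + 1) = (r : ℝ) / ((r : ℝ) - rho n)) :
    ∀ M : Multiset ℕ, (∀ n ∈ M, 0 < n) →
      ((M.map rho).sum = (r : ℝ) ↔
        M = Multiset.replicate r 1 ∨
        M = Multiset.replicate (r - 1) 2 ∨
        M = 1 ::ₘ Multiset.replicate (r - 2) 3 ∨
        M = 1 ::ₘ 2 ::ₘ Multiset.replicate (r - 3) 5) := by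
  classical
  have hx : (4:ℝ) ≤ (r:ℝ) := by exact_mod_cast hr
  set x : ℝ := (r:ℝ) with hxd
  have hmono := Stmt4Aux.rho_mono hr hrho0 hrho
  have h1 : rho 1 = 1 := Stmt4Aux.rho_one hr hrho0 hrho
  have hval2 : rho 2 * (x - 1) = x := Stmt4Aux.rho_val2 hr hrho0 hrho
  have hval3 : rho 3 * (x - 2) = x - 1 := Stmt4Aux.rho_val3 hr hrho0 hrho
  have hval4 : rho 4 * (x^2 - 3*x + 1) = x * (x - 2) := Stmt4Aux.rho_val4 hr hrho0 hrho
  have hval5 : rho 5 * ((x - 1) * (x - 3)) = x^2 - 3*x + 1 := Stmt4Aux.rho_val5 hr hrho0 hrho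
  have hubD := Stmt4Aux.rho_ubD hr hrho0 hrho
  have hub6 := Stmt4Aux.rho_ub6 hr hrho0 hrho
  have hx1 : (0:ℝ) < x - 1 := by linarith
  have hx2 : (0:ℝ) < x - 2 := by linarith
  have hx3 : (0:ℝ) < x - 3 := by linarith
  have hD : (0:ℝ) < x^2 - 5*x + 5 := by nlinarith
  have hq : (0:ℝ) < x^2 - 3*x + 1 := by nlinarith
  have hP3 : (0:ℝ) < x^3 - 7*x^2 + 14*x - 7 := by nlinarith
  have hP4 : (0:ℝ) < x^4 - 9*x^3 + 27*x^2 - 30*x + 9 := by nlinarith [sq_nonneg (x-4), sq_nonneg x, mul_nonneg (mul_nonneg (sub_nonneg.2 hx) (sub_nonneg.2 hx)) (sub_nonneg.2 hx)]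
  have dpoly : (x-4)*((x-3)*(x^2-3*x+1)) + 1 ≤ x^4 - 9*x^3 + 27*x^2 - 30*x + 9 := by
    have h'' : (0:ℝ) ≤ (x-4)*(x^2-3*x+1) :=
      mul_nonneg (by linarith : (0:ℝ) ≤ x-4) (le_of_lt hq)
    nlinarith [h'']
  have hrho2gt1 : 1 < rho 2 := by
    have := hmono (show 1 < 2 by norm_num); rwa [h1] at this
  intro M hpos
  constructor
  · intro hsum
    -- ==================== forward direction ====================
    set M1 := M.filter (fun n => n = 1) with hM1d
    set N1 := M.filter (fun n => ¬ n = 1) with hN1d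
    have hsplit : M1 + N1 = M := Multiset.filter_add_not _ M
    have hM1mem : ∀ n ∈ M1, n = 1 := fun n hn => (Multiset.mem_filter.1 hn).2
    have hN1mem : ∀ n ∈ N1, 2 ≤ n := fun n hn => by
      have h' := Multiset.mem_filter.1 hn
      have := hpos n h'.1
      omega
    have hcard1 : M1.card + N1.card = M.card := by rw [← Multiset.card_add, hsplit]
    have hsum1 : (M1.map rho).sum + (N1.map rho).sum = x := by
      have h' : ((M1 + N1).map rho).sum = x := by rw [hsplit]; exact hsum
      rwa [Multiset.map_add, Multiset.sum_add] at h'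
    have hM1sum : (M1.map rho).sum = (M1.card : ℝ) * 1 :=
      Stmt4Aux.sum_map_eq_card_mul (fun n hn => by rw [hM1mem n hn, h1])
    have hS : (N1.map rho).sum = x - M1.card := by rw [hM1sum] at hsum1; linarith
    have hN1lb : ∀ n ∈ N1, rho 2 ≤ rho n := fun n hn => hmono.monotone (hN1mem n hn)
    -- card M ≤ r
    have hcardle : M.card ≤ r := by
      have h' := Stmt4Aux.card_mul_le_sum_map (s := M) (f := rho) (C := 1)
        (fun n hn => by rw [← h1]; exact hmono.monotone (hpos n hn))
      rw [hsum, mul_one, hxd] at h'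
      exact_mod_cast h'
    -- card M = r or card M = r - 1
    have hcases : M.card = r ∨ M.card + 1 = r := by
      by_contra hc
      push_neg at hc
      have hle : M.card + 2 ≤ r := by omega
      have hsr : (M.card:ℝ) + 2 ≤ x := by rw [hxd]; exact_mod_cast hle
      have hacard : (M1.card:ℝ) + N1.card = M.card := by exact_mod_cast hcard1
      rcases eq_or_ne N1 0 with h0 | h0
      · rw [h0] at hacard hS
        simp only [Multiset.map_zero, Multiset.sum_zero, Multiset.card_zero] at hS
        push_cast at hacard hS
        linarith
      · have hub : (N1.map rho).sum * (x^2 - 5*x + 5) < (N1.card:ℝ) * (x^2 - 4*x + 2) := by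
          have h' := Stmt4Aux.sum_map_lt_card_mul (s := N1)
            (f := fun n => rho n * (x^2 - 5*x + 5)) (C := x^2 - 4*x + 2) h0
            (fun n _ => hubD n)
          rwa [Stmt4Aux.sum_map_mul_right'] at h'
        rw [hS] at hub
        have hmleS : (N1.card:ℝ) ≤ (M.card:ℝ) := by exact_mod_cast (by omega : N1.card ≤ M.card)
        have c1 : (N1.card:ℝ)*(x-3) ≤ (M.card:ℝ)*(x-3) :=
          mul_le_mul_of_nonneg_right hmleS (by linarith)
        have c2 : (M.card:ℝ)*(x-3) ≤ (x-2)*(x-3) :=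
          mul_le_mul_of_nonneg_right (by linarith) (by linarith)
        have c4 : 2*(x^2-5*x+5) ≤ (x - (M1.card:ℝ))*(x^2-5*x+5) := by
          have hm0 : (0:ℝ) ≤ (N1.card:ℝ) := Nat.cast_nonneg _
          have : (2:ℝ) ≤ x - (M1.card:ℝ) := by linarith
          nlinarith [hD]
        have c5 : (x - (M1.card:ℝ))*(x^2-5*x+5)
            = (x - (M.card:ℝ))*(x^2-5*x+5) + (N1.card:ℝ)*(x^2-5*x+5) := by
          linear_combination (-(x^2-5*x+5)) * hacard
        nlinarith [hub, c1, c2, c4, c5, hx]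
    rcases hcases with hcase | hcase
    · -- =========== M = replicate r 1 ===========
      left
      have hN10 : N1 = 0 := by
        by_contra h0
        have hlt := Stmt4Aux.card_mul_lt_sum_map (s := N1) (f := rho) (C := 1) h0
          (fun n hn => by rw [← h1]; exact hmono (by have := hN1mem n hn; omega))
        have hacard : (M1.card:ℝ) + N1.card = x := by
          have h' : ((M1.card + N1.card : ℕ):ℝ) = ((r:ℕ):ℝ) := by rw [hcard1, hcase]
          push_cast at h'
          linarith
        rw [hS] at hlt
        linarith
      have hMM1 : M = M1 := by rw [← hsplit, hN10, add_zero]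
      refine Multiset.eq_replicate.2 ⟨hcase, fun b hb => hM1mem b (hMM1 ▸ hb)⟩
    · -- =========== card M = r - 1 ===========
      have hacard : (M1.card:ℝ) + N1.card + 1 = x := by
        have h' : ((M1.card + N1.card + 1 : ℕ):ℝ) = ((r:ℕ):ℝ) := by rw [hcard1, hcase]
        push_cast at h'
        linarith
      have hSN1 : (N1.map rho).sum = (N1.card:ℝ) + 1 := by rw [hS]; linarith
      have hN1ne : N1 ≠ 0 := by
        intro h0
        rw [h0] at hSN1
        simp at hSN1
      have hub : (N1.map rho).sum * (x^2 - 5*x + 5) < (N1.card:ℝ) * (x^2 - 4*x + 2) := by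
        have h' := Stmt4Aux.sum_map_lt_card_mul (s := N1)
          (f := fun n => rho n * (x^2 - 5*x + 5)) (C := x^2 - 4*x + 2) hN1ne
          (fun n _ => hubD n)
        rwa [Stmt4Aux.sum_map_mul_right'] at h'
      rw [hSN1] at hub
      -- N1.card ≥ r - 2
      have hmlb : r ≤ N1.card + 2 := by
        by_contra hcon
        push_neg at hcon
        have hm3 : (N1.card:ℝ) ≤ x - 3 := by
          have h' : ((N1.card + 3 : ℕ):ℝ) ≤ ((r:ℕ):ℝ) := by exact_mod_cast (by omega : N1.card + 3 ≤ r)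
          push_cast at h'
          linarith
        nlinarith [hub, hm3, hx, Nat.cast_nonneg (α := ℝ) N1.card]
      have hcases2 : N1.card = r - 1 ∨ N1.card = r - 2 := by omega
      rcases hcases2 with hm | hm
      · -- =========== M = replicate (r-1) 2 ===========
        right; left
        have ha0 : M1.card = 0 := by omega
        have hmr : (N1.card:ℝ) = x - 1 := by
          have h' : ((N1.card + 1 : ℕ):ℝ) = ((r:ℕ):ℝ) := by exact_mod_cast (by omega : N1.card + 1 = r)
          push_cast at h'
          linarith
        have hle : (N1.map rho).sum ≤ (N1.card:ℝ) * rho 2 := by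
          rw [hSN1, hmr]
          nlinarith [hval2]
        have hall2 : ∀ n ∈ N1, n = 2 := by
          intro n hn
          have hle' := Stmt4Aux.mem_le_of_sum_le hN1lb hle hn
          exact hmono.injective (le_antisymm hle' (hN1lb n hn))
        have hMN : M = N1 := by
          rw [← hsplit, Multiset.card_eq_zero.1 ha0, zero_add]
        rw [hMN]
        exact Multiset.eq_replicate.2 ⟨hm, hall2⟩
      · -- =========== card N1 = r - 2, one element 1 ===========
        have ha1 : M1.card = 1 := by omega
        have hmr : (N1.card:ℝ) = x - 2 := by
          have h' : ((N1.card + 2 : ℕ):ℝ) = ((r:ℕ):ℝ) := by exact_mod_cast (by omega : N1.card + 2 = r)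
          push_cast at h'
          linarith
        -- split off twos and threes
        set M2 := N1.filter (fun n => n = 2) with hM2d
        set N2 := N1.filter (fun n => ¬ n = 2) with hN2d
        have hsplit2 : M2 + N2 = N1 := Multiset.filter_add_not _ N1
        have hM2mem : ∀ n ∈ M2, n = 2 := fun n hn => (Multiset.mem_filter.1 hn).2
        have hN2mem : ∀ n ∈ N2, 3 ≤ n := fun n hn => by
          have h' := Multiset.mem_filter.1 hn
          have := hN1mem n h'.1
          omega
        set M3 := N2.filter (fun n => n = 3) with hM3d
        set N3 := N2.filter (fun n => ¬ n = 3) with hN3d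
        have hsplit3 : M3 + N3 = N2 := Multiset.filter_add_not _ N2
        have hM3mem : ∀ n ∈ M3, n = 3 := fun n hn => (Multiset.mem_filter.1 hn).2
        have hN3mem : ∀ n ∈ N3, 4 ≤ n := fun n hn => by
          have h' := Multiset.mem_filter.1 hn
          have := hN2mem n h'.1
          omega
        have hcard2 : M2.card + N2.card = N1.card := by rw [← Multiset.card_add, hsplit2]
        have hcard3 : M3.card + N3.card = N2.card := by rw [← Multiset.card_add, hsplit3]
        have hM2sum : (M2.map rho).sum = (M2.card : ℝ) * rho 2 :=
          Stmt4Aux.sum_map_eq_card_mul (fun n hn => by rw [hM2mem n hn])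
        have hM3sum : (M3.map rho).sum = (M3.card : ℝ) * rho 3 :=
          Stmt4Aux.sum_map_eq_card_mul (fun n hn => by rw [hM3mem n hn])
        have hE : (M2.card:ℝ) * rho 2 + (M3.card:ℝ) * rho 3 + (N3.map rho).sum = x - 1 := by
          have h2' : ((M2 + N2).map rho).sum = (N1.map rho).sum := by rw [hsplit2]
          have h3' : ((M3 + N3).map rho).sum = (N2.map rho).sum := by rw [hsplit3]
          rw [Multiset.map_add, Multiset.sum_add] at h2' h3'
          rw [hM2sum] at h2'
          rw [hM3sum] at h3'
          rw [hSN1, hmr] at h2'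
          linarith
        have hbc : (M2.card:ℝ) + (M3.card:ℝ) + (N3.card:ℝ) = x - 2 := by
          have h' : ((M2.card + M3.card + N3.card : ℕ):ℝ) = ((N1.card:ℕ):ℝ) := by
            exact_mod_cast (by omega : M2.card + M3.card + N3.card = N1.card)
          push_cast at h'
          linarith [hmr]
        rcases eq_or_ne N3 0 with h30 | h30
        · -- =========== M = 1 ::ₘ replicate (r-2) 3 ===========
          right; right; left
          have hN3card : N3.card = 0 := by rw [h30]; rfl
          have hE' : (M2.card:ℝ) * rho 2 + (M3.card:ℝ) * rho 3 = x - 1 := by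
            rw [h30] at hE
            simpa using hE
          have hc : (M3.card:ℝ) = x - 2 - (M2.card:ℝ) := by
            rw [hN3card] at hbc
            push_cast at hbc
            linarith
          have e2 : (M2.card:ℝ)*x*(x-2) + (M3.card:ℝ)*(x-1)^2 = (x-1)^2*(x-2) := by
            linear_combination ((x-1)*(x-2))*hE' - (M2.card:ℝ)*(x-2)*hval2 - (M3.card:ℝ)*(x-1)*hval3
          have hb0 : (M2.card:ℝ) = 0 := by
            linear_combination (x-1)^2*hc - e2
          have hb0' : M2.card = 0 := by exact_mod_cast hb0
          have hM3card : M3.card = r - 2 := by omega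
          obtain ⟨z, hz⟩ := Multiset.card_eq_one.1 ha1
          have hz1 : z = 1 := hM1mem z (by rw [hz]; exact Multiset.mem_singleton_self z)
          have hM3rep : M3 = Multiset.replicate (r-2) 3 :=
            Multiset.eq_replicate.2 ⟨hM3card, hM3mem⟩
          rw [← hsplit, hz, hz1, ← hsplit2, Multiset.card_eq_zero.1 hb0', ← hsplit3, h30,
            hM3rep]
          simp [Multiset.singleton_add]
        · -- =========== N3 nonempty: M = 1 ::ₘ 2 ::ₘ replicate (r-3) 5 ===========
          right; right; right
          have hN3lb : ∀ n ∈ N3, rho 3 < rho n := fun n hn => hmono (by have := hN3mem n hn; omega)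
          -- b ≥ 1
          have hblb : 1 ≤ M2.card := by
            by_contra h0
            push_neg at h0
            have hb0 : (M2.card:ℝ) = 0 := by
              have : M2.card = 0 := by omega
              exact_mod_cast this
            have hgt : (N3.card:ℝ) * rho 3 < (N3.map rho).sum :=
              Stmt4Aux.card_mul_lt_sum_map h30 hN3lb
            have hbc3 : ((M3.card:ℝ) + (N3.card:ℝ)) * rho 3 = (x-2) * rho 3 := by
              rw [hb0] at hbc
              rw [show (M3.card:ℝ) + (N3.card:ℝ) = x - 2 by linarith only [hbc]]
            have hb0m : (M2.card:ℝ) * rho 2 = 0 := by rw [hb0]; ring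
            linarith only [hE, hgt, hbc3, hval3, hb0m]
          -- the key inequality b*D < m''*(x-1)
          have hub3 : (N3.map rho).sum * (x^2 - 5*x + 5) < (N3.card:ℝ) * (x^2 - 4*x + 2) := by
            have h' := Stmt4Aux.sum_map_lt_card_mul (s := N3)
              (f := fun n => rho n * (x^2 - 5*x + 5)) (C := x^2 - 4*x + 2) h30
              (fun n _ => hubD n)
            rwa [Stmt4Aux.sum_map_mul_right'] at h'
          have e1 : (N3.map rho).sum * ((x-1)*(x-2))
              = (x-1)^2*(x-2) - (M2.card:ℝ)*x*(x-2) - (M3.card:ℝ)*(x-1)^2 := by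
            linear_combination ((x-1)*(x-2))*hE - (M2.card:ℝ)*(x-2)*hval2 - (M3.card:ℝ)*(x-1)*hval3
          have hcm : (M3.card:ℝ) = x - 2 - (M2.card:ℝ) - (N3.card:ℝ) := by linear_combination hbc
          rw [hcm] at e1
          have e2 : (N3.map rho).sum * (x^2-5*x+5) * ((x-1)*(x-2))
              = ((x-1)^2*(x-2) - (M2.card:ℝ)*x*(x-2)
                - (x - 2 - (M2.card:ℝ) - (N3.card:ℝ))*(x-1)^2)*(x^2-5*x+5) := by
            linear_combination (x^2-5*x+5) * e1
          have hub4 := mul_lt_mul_of_pos_right hub3 (mul_pos hx1 hx2)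
          have hkey : (M2.card:ℝ)*(x^2-5*x+5) < (N3.card:ℝ)*(x-1) := by linarith only [hub4, e2]
          -- b = 1
          have hb1 : M2.card = 1 := by
            by_contra hbne
            have hb2 : 2 ≤ M2.card := by omega
            have hb2' : (2:ℝ) ≤ (M2.card:ℝ) := by exact_mod_cast hb2
            have hcge : (0:ℝ) ≤ (M3.card:ℝ) := Nat.cast_nonneg _
            have hmub : (N3.card:ℝ) ≤ x - 2 - (M2.card:ℝ) := by linarith
            have d1 : (N3.card:ℝ)*(x-1) ≤ (x - 2 - (M2.card:ℝ))*(x-1) :=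
              mul_le_mul_of_nonneg_right hmub (by linarith)
            have p1 : 2*((x-2)*(x-2)) ≤ (M2.card:ℝ)*((x-2)*(x-2)) :=
              mul_le_mul_of_nonneg_right hb2' (mul_self_nonneg _)
            have p2 : (0:ℝ) < (x-2)*(x-3) := mul_pos hx2 hx3
            linarith only [hkey, d1, p1, p2]
          have hb1' : (M2.card:ℝ) = 1 := by exact_mod_cast hb1
          -- c = 0 and m'' = r - 3
          have hm''3 : r ≤ N3.card + 3 := by
            by_contra hcon
            push_neg at hcon
            have hm4 : (N3.card:ℝ) ≤ x - 4 := by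
              have h' : ((N3.card + 4 : ℕ):ℝ) ≤ ((r:ℕ):ℝ) := by
                exact_mod_cast (by omega : N3.card + 4 ≤ r)
              push_cast at h'
              linarith
            have d1 : (N3.card:ℝ)*(x-1) ≤ (x-4)*(x-1) :=
              mul_le_mul_of_nonneg_right hm4 (by linarith)
            rw [hb1'] at hkey
            linarith only [hkey, d1]
          have hc0 : M3.card = 0 := by omega
          have hm''r : N3.card = r - 3 := by omega
          have hc0' : (M3.card:ℝ) = 0 := by exact_mod_cast hc0
          have hmr3 : (N3.card:ℝ) = x - 3 := by
            have h' : ((N3.card + 3 : ℕ):ℝ) = ((r:ℕ):ℝ) := by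
              exact_mod_cast (by omega : N3.card + 3 = r)
            push_cast at h'
            linarith
          -- the sum over N3
          have hS3 : (N3.map rho).sum = x - 1 - rho 2 := by
            rw [hb1', hc0'] at hE
            linarith only [hE]
          -- split N3 into fours, fives, and ≥ 6
          set M4 := N3.filter (fun n => n = 4) with hM4d
          set N4 := N3.filter (fun n => ¬ n = 4) with hN4d
          have hsplit4 : M4 + N4 = N3 := Multiset.filter_add_not _ N3
          have hM4mem : ∀ n ∈ M4, n = 4 := fun n hn => (Multiset.mem_filter.1 hn).2
          have hN4mem : ∀ n ∈ N4, 5 ≤ n := fun n hn => by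
            have h' := Multiset.mem_filter.1 hn
            have := hN3mem n h'.1
            omega
          set M5 := N4.filter (fun n => n = 5) with hM5d
          set N5 := N4.filter (fun n => ¬ n = 5) with hN5d
          have hsplit5 : M5 + N5 = N4 := Multiset.filter_add_not _ N4
          have hM5mem : ∀ n ∈ M5, n = 5 := fun n hn => (Multiset.mem_filter.1 hn).2
          have hN5mem : ∀ n ∈ N5, 6 ≤ n := fun n hn => by
            have h' := Multiset.mem_filter.1 hn
            have := hN4mem n h'.1
            omega
          have hcard4 : M4.card + N4.card = N3.card := by rw [← Multiset.card_add, hsplit4]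
          have hcard5 : M5.card + N5.card = N4.card := by rw [← Multiset.card_add, hsplit5]
          have hM4sum : (M4.map rho).sum = (M4.card : ℝ) * rho 4 :=
            Stmt4Aux.sum_map_eq_card_mul (fun n hn => by rw [hM4mem n hn])
          have hM5sum : (M5.map rho).sum = (M5.card : ℝ) * rho 5 :=
            Stmt4Aux.sum_map_eq_card_mul (fun n hn => by rw [hM5mem n hn])
          have hE3 : (M4.card:ℝ) * rho 4 + (M5.card:ℝ) * rho 5 + (N5.map rho).sum
              = x - 1 - rho 2 := by
            have h4' : ((M4 + N4).map rho).sum = (N3.map rho).sum := by rw [hsplit4]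
            have h5' : ((M5 + N5).map rho).sum = (N4.map rho).sum := by rw [hsplit5]
            rw [Multiset.map_add, Multiset.sum_add] at h4' h5'
            rw [hM4sum] at h4'
            rw [hM5sum] at h5'
            rw [hS3] at h4'
            linarith only [h4', h5']
          have hjfk : (M4.card:ℝ) + (M5.card:ℝ) + (N5.card:ℝ) = x - 3 := by
            have h' : ((M4.card + M5.card + N5.card : ℕ):ℝ) = ((N3.card:ℕ):ℝ) := by
              exact_mod_cast (by omega : M4.card + M5.card + N5.card = N3.card)
            push_cast at h'
            linarith only [h', hmr3]
          -- identity: (x-3) * rho 5 = x - 1 - rho 2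
          have hid2 : ((x-3) * rho 5) * (x-1) = (x - 1 - rho 2) * (x-1) := by
            linear_combination hval5 + hval2
          have hid := mul_right_cancel₀ (ne_of_gt hx1) hid2
          have h5eq : (N5.map rho).sum
              = (N5.card:ℝ) * rho 5 + (M4.card:ℝ) * (rho 5 - rho 4) := by
            linear_combination hE3 - hid - rho 5 * hjfk
          have hwv : (rho 5 - rho 4) * ((x-1)*(x-3)*(x^2-3*x+1)) = 1 := by
            linear_combination (x^2-3*x+1)*hval5 - ((x-1)*(x-3))*hval4
          have hwpos : 0 < rho 5 - rho 4 := sub_pos.2 (hmono (by norm_num))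
          rcases eq_or_ne N5 0 with h50 | h50
          · -- all remaining are fives
            have hS50 : (N5.map rho).sum = 0 := by rw [h50]; rfl
            have hN5card : N5.card = 0 := by rw [h50]; rfl
            have hj0 : (M4.card:ℝ) = 0 := by
              rw [hS50, hN5card] at h5eq
              push_cast at h5eq
              rcases mul_eq_zero.1 (by linarith : (M4.card:ℝ) * (rho 5 - rho 4) = 0) with h | h
              · exact h
              · exact absurd h (ne_of_gt hwpos)
            have hj0' : M4.card = 0 := by exact_mod_cast hj0
            have hfcard : M5.card = r - 3 := by omega
            obtain ⟨z, hz⟩ := Multiset.card_eq_one.1 ha1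
            have hz1 : z = 1 := hM1mem z (by rw [hz]; exact Multiset.mem_singleton_self z)
            obtain ⟨z2, hz2⟩ := Multiset.card_eq_one.1 hb1
            have hz22 : z2 = 2 := hM2mem z2 (by rw [hz2]; exact Multiset.mem_singleton_self z2)
            have hM5rep : M5 = Multiset.replicate (r-3) 5 :=
              Multiset.eq_replicate.2 ⟨hfcard, hM5mem⟩
            rw [← hsplit, hz, hz1, ← hsplit2, hz2, hz22, ← hsplit3,
              Multiset.card_eq_zero.1 hc0, ← hsplit4, Multiset.card_eq_zero.1 hj0',
              ← hsplit5, h50, hM5rep]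
            simp only [Multiset.singleton_add, add_zero, zero_add, ← Multiset.singleton_add,
              add_assoc]
          · -- N5 nonempty: contradiction
            exfalso
            have hlow : (N5.card:ℝ) * rho 5 < (N5.map rho).sum :=
              Stmt4Aux.card_mul_lt_sum_map h50
                (fun n hn => hmono (by have := hN5mem n hn; omega))
            have hjpos : (0:ℝ) < (M4.card:ℝ) * (rho 5 - rho 4) := by linarith only [h5eq, hlow]
            have hj1 : (1:ℝ) ≤ (M4.card:ℝ) := by
              have : M4.card ≠ 0 := by
                intro h0
                rw [h0] at hjpos
                push_cast at hjpos
                linarith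
              exact_mod_cast (by omega : 1 ≤ M4.card)
            have hk4 : (N5.card:ℝ) ≤ x - 4 := by
              have hj1n : 1 ≤ M4.card := by exact_mod_cast hj1
              have hcge : (0:ℝ) ≤ (M5.card:ℝ) := Nat.cast_nonneg _
              linarith only [hjfk, hj1, hcge]
            have hub5 : (N5.map rho).sum * (x^4 - 9*x^3 + 27*x^2 - 30*x + 9)
                < (N5.card:ℝ) * ((x^4 - 9*x^3 + 27*x^2 - 30*x + 9) + (x^3 - 7*x^2 + 14*x - 7)) := by
              have h' := Stmt4Aux.sum_map_lt_card_mul (s := N5)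
                (f := fun n => rho n * (x^4 - 9*x^3 + 27*x^2 - 30*x + 9))
                (C := (x^4 - 9*x^3 + 27*x^2 - 30*x + 9) + (x^3 - 7*x^2 + 14*x - 7)) h50
                (fun n hn => hub6 n (hN5mem n hn))
              rwa [Stmt4Aux.sum_map_mul_right'] at h'
            have c1 : (N5.map rho).sum * (x^4 - 9*x^3 + 27*x^2 - 30*x + 9)
                = (N5.card:ℝ) * rho 5 * (x^4 - 9*x^3 + 27*x^2 - 30*x + 9)
                  + (M4.card:ℝ) * (rho 5 - rho 4) * (x^4 - 9*x^3 + 27*x^2 - 30*x + 9) := by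
              linear_combination (x^4 - 9*x^3 + 27*x^2 - 30*x + 9) * h5eq
            have c2 : (M4.card:ℝ) * (rho 5 - rho 4) * (x^4 - 9*x^3 + 27*x^2 - 30*x + 9)
                < (N5.card:ℝ) * (((x^4 - 9*x^3 + 27*x^2 - 30*x + 9) + (x^3 - 7*x^2 + 14*x - 7))
                  - rho 5 * (x^4 - 9*x^3 + 27*x^2 - 30*x + 9)) := by
              linarith only [hub5, c1]
            have haux : (((x^4 - 9*x^3 + 27*x^2 - 30*x + 9) + (x^3 - 7*x^2 + 14*x - 7))
                - rho 5 * (x^4 - 9*x^3 + 27*x^2 - 30*x + 9)) * ((x-1)*(x-3)) = x - 3 := by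
              linear_combination (-(x^4 - 9*x^3 + 27*x^2 - 30*x + 9))*hval5
            have c3 := mul_lt_mul_of_pos_right c2 (mul_pos hx1 hx3)
            rw [mul_assoc ((N5.card:ℝ)) _ ((x-1)*(x-3)), haux] at c3
            have c5 := mul_lt_mul_of_pos_right c3 hq
            have e6 : (M4.card:ℝ) * (rho 5 - rho 4) * (x^4 - 9*x^3 + 27*x^2 - 30*x + 9)
                * ((x-1)*(x-3)) * (x^2-3*x+1)
                = (M4.card:ℝ) * (x^4 - 9*x^3 + 27*x^2 - 30*x + 9) := by
              linear_combination ((M4.card:ℝ) * (x^4 - 9*x^3 + 27*x^2 - 30*x + 9)) * hwv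
            rw [e6] at c5
            -- c5 : j * P4 < k' * (x-3) * (x^2-3x+1)
            have d1 : (N5.card:ℝ) * (x-3) * (x^2-3*x+1) ≤ (x-4) * ((x-3) * (x^2-3*x+1)) := by
              have h'' := mul_le_mul_of_nonneg_right hk4 (le_of_lt (mul_pos hx3 hq))
              linarith only [h'']
            have d2 : (x^4 - 9*x^3 + 27*x^2 - 30*x + 9) ≤ (M4.card:ℝ) * (x^4 - 9*x^3 + 27*x^2 - 30*x + 9) := by
              have h'' := mul_le_mul_of_nonneg_right hj1 (le_of_lt hP4)
              linarith only [h'']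
            linarith only [c5, d1, d2, dpoly]
  · -- ==================== reverse direction ====================
    intro h
    rcases h with rfl | rfl | rfl | rfl
    · rw [Multiset.map_replicate, Multiset.sum_replicate, h1, nsmul_eq_mul, mul_one]
    · rw [Multiset.map_replicate, Multiset.sum_replicate, nsmul_eq_mul]
      have hc : ((r - 1 : ℕ):ℝ) = x - 1 := by
        have h' : ((r - 1 : ℕ):ℝ) + 1 = ((r:ℕ):ℝ) := by exact_mod_cast (by omega : (r-1) + 1 = r)
        linarith
      rw [hc]
      linarith [hval2]
    · rw [Multiset.map_cons, Multiset.sum_cons, Multiset.map_replicate, Multiset.sum_replicate,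
        nsmul_eq_mul, h1]
      have hc : ((r - 2 : ℕ):ℝ) = x - 2 := by
        have h' : ((r - 2 : ℕ):ℝ) + 2 = ((r:ℕ):ℝ) := by exact_mod_cast (by omega : (r-2) + 2 = r)
        linarith
      rw [hc]
      linarith [hval3]
    · rw [Multiset.map_cons, Multiset.sum_cons, Multiset.map_cons, Multiset.sum_cons,
        Multiset.map_replicate, Multiset.sum_replicate, nsmul_eq_mul, h1]
      have hc : ((r - 3 : ℕ):ℝ) = x - 3 := by
        have h' : ((r - 3 : ℕ):ℝ) + 3 = ((r:ℕ):ℝ) := by exact_mod_cast (by omega : (r-3) + 3 = r)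
        linarith
      rw [hc]
      have g2 : (1 + (rho 2 + (x-3) * rho 5)) * (x-1) = x * (x-1) := by
        linear_combination hval2 + hval5
      have := mul_right_cancel₀ (ne_of_gt hx1) g2
      linarith
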